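/- arXiv:2505.02992 — 6 statements merged into one kernel-verified Lean document; each statement's English description precedes it below -/
import Mathlib

section
/- Let c, ν, k be positive real constants and let (w(t), s(t)) solve the ODE system w' = k(1 - c s), s' = w - ν s on an interval I. Let P : J → ℝ≥0 be a solution of dP/ds = ν·√(2P(s)) + k(1 - c s) with P > 0, where the range of s(t) on I is contained in J. Define L(w,s) = w - ν s + √(2P(s)). If L(w(t₀), s(t₀)) = 0 for some t₀ ∈ I, then L(w(t), s(t)) = 0 for all t ∈ I. -/
open Real Set

lemma vanish_aux {f a : ℝ → ℝ} {I : Set ℝ} (hI : I.OrdConnected)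
    (hf : ∀ t ∈ I, HasDerivAt f (a t * f t) t)
    (ha : ∀ t ∈ I, ContinuousAt a t)
    {t₀ : ℝ} (ht₀ : t₀ ∈ I) (h0 : f t₀ = 0) : ∀ t ∈ I, f t = 0 := by
  intro t ht
  rcases le_total t₀ t with hle | hle
  · have hsub : Icc t₀ t ⊆ I := hI.out ht₀ ht
    obtain ⟨C, hC⟩ := (isCompact_Icc (a := t₀) (b := t)).exists_bound_of_continuousOn
      (fun x hx => (ha x (hsub hx)).continuousWithinAt)
    have key := norm_le_gronwallBound_of_norm_deriv_right_le (f := f)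
      (f' := fun x => a x * f x) (δ := 0) (K := C) (ε := 0) (a := t₀) (b := t)
      (fun x hx => ((hf x (hsub hx)).continuousAt).continuousWithinAt)
      (fun x hx => ((hf x (hsub (Ico_subset_Icc_self hx))).hasDerivWithinAt))
      (by simp [h0])
      (fun x hx => by
        have := hC x (Ico_subset_Icc_self hx)
        calc ‖a x * f x‖ = ‖a x‖ * ‖f x‖ := norm_mul _ _
          _ ≤ C * ‖f x‖ + 0 := by
              have : ‖a x‖ * ‖f x‖ ≤ C * ‖f x‖ :=
                mul_le_mul_of_nonneg_right this (norm_nonneg _)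
              linarith)
    have := key t ⟨hle, le_refl t⟩
    rw [gronwallBound_ε0_δ0] at this
    have := norm_nonneg (f t)
    have : ‖f t‖ = 0 := le_antisymm (by linarith) (norm_nonneg _)
    simpa using this
  · have hsub : Icc t t₀ ⊆ I := hI.out ht ht₀
    set g : ℝ → ℝ := fun τ => f (t + t₀ - τ) with hg
    have hmem : ∀ τ ∈ Icc t t₀, t + t₀ - τ ∈ Icc t t₀ := by
      intro τ hτ; constructor <;> [linarith [hτ.2]; linarith [hτ.1]]
    obtain ⟨C, hC⟩ := (isCompact_Icc (a := t) (b := t₀)).exists_bound_of_continuousOn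
      (fun x hx => (ha x (hsub hx)).continuousWithinAt)
    have hgd : ∀ τ ∈ Icc t t₀,
        HasDerivAt g (-(a (t + t₀ - τ) * f (t + t₀ - τ))) τ := by
      intro τ hτ
      have h1 : HasDerivAt (fun τ : ℝ => t + t₀ - τ) (-1) τ := by
        simpa using (hasDerivAt_id τ).const_sub (t + t₀)
      have := (hf _ (hsub (hmem τ hτ))).comp τ h1
      exact this.congr_deriv (by ring)
    have key := norm_le_gronwallBound_of_norm_deriv_right_le (f := g)
      (f' := fun τ => -(a (t + t₀ - τ) * f (t + t₀ - τ))) (δ := 0) (K := C) (ε := 0)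
      (a := t) (b := t₀)
      (fun x hx => ((hgd x hx).continuousAt).continuousWithinAt)
      (fun x hx => (hgd x (Ico_subset_Icc_self hx)).hasDerivWithinAt)
      (by simp [hg, h0])
      (fun x hx => by
        have hx' := hmem x (Ico_subset_Icc_self hx)
        have := hC _ hx'
        have hgx : g x = f (t + t₀ - x) := rfl
        calc ‖-(a (t + t₀ - x) * f (t + t₀ - x))‖
            = ‖a (t + t₀ - x)‖ * ‖f (t + t₀ - x)‖ := by rw [norm_neg, norm_mul]
          _ ≤ C * ‖g x‖ + 0 := by
              rw [hgx]
              have : ‖a (t + t₀ - x)‖ * ‖f (t + t₀ - x)‖ ≤ C * ‖f (t + t₀ - x)‖ :=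
                mul_le_mul_of_nonneg_right this (norm_nonneg _)
              linarith)
    have h2 := key t₀ ⟨hle, le_refl t₀⟩
    rw [gronwallBound_ε0_δ0] at h2
    have hgt : g t₀ = f t := by simp [hg]
    rw [hgt] at h2
    have : ‖f t‖ = 0 := le_antisymm h2 (norm_nonneg _)
    simpa using this

theorem stmt0 (c ν k : ℝ) (hc : 0 < c) (hν : 0 < ν) (hk : 0 < k)
    (I J : Set ℝ) (hI : I.OrdConnected)
    (w s P : ℝ → ℝ)
    (hw : ∀ t ∈ I, HasDerivAt w (k * (1 - c * s t)) t)
    (hs : ∀ t ∈ I, HasDerivAt s (w t - ν * s t) t)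
    (hP : ∀ x ∈ J, HasDerivAt P (ν * Real.sqrt (2 * P x) + k * (1 - c * x)) x)
    (hPpos : ∀ x ∈ J, 0 < P x)
    (hrange : ∀ t ∈ I, s t ∈ J)
    (t₀ : ℝ) (ht₀ : t₀ ∈ I)
    (hL0 : w t₀ - ν * s t₀ + Real.sqrt (2 * P (s t₀)) = 0) :
    ∀ t ∈ I, w t - ν * s t + Real.sqrt (2 * P (s t)) = 0 := by
  set L : ℝ → ℝ := fun t => w t - ν * s t + Real.sqrt (2 * P (s t)) with hLdef
  set a : ℝ → ℝ := fun t => k * (1 - c * s t) / Real.sqrt (2 * P (s t)) with hadef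
  -- derivative of t ↦ √(2 P (s t))
  have hsqrt : ∀ τ ∈ I, HasDerivAt (fun t => Real.sqrt (2 * P (s t)))
      ((ν * Real.sqrt (2 * P (s τ)) + k * (1 - c * s τ)) * (w τ - ν * s τ)
        / Real.sqrt (2 * P (s τ))) τ := by
    intro τ hτ
    have hu : s τ ∈ J := hrange τ hτ
    have hPu : 0 < P (s τ) := hPpos _ hu
    have h2P : (2 : ℝ) * P (s τ) ≠ 0 := by positivity
    have hq : 0 < Real.sqrt (2 * P (s τ)) := Real.sqrt_pos.2 (by positivity)
    have hcomp : HasDerivAt (fun t => P (s t))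
        ((ν * Real.sqrt (2 * P (s τ)) + k * (1 - c * s τ)) * (w τ - ν * s τ)) τ :=
      (hP _ hu).comp τ (hs τ hτ)
    have h2 : HasDerivAt (fun t => 2 * P (s t))
        (2 * ((ν * Real.sqrt (2 * P (s τ)) + k * (1 - c * s τ)) * (w τ - ν * s τ))) τ :=
      hcomp.const_mul 2
    have hs2 := (Real.hasDerivAt_sqrt h2P).comp τ h2
    refine hs2.congr_deriv ?_
    field_simp
  have hLd : ∀ τ ∈ I, HasDerivAt L (a τ * L τ) τ := by
    intro τ hτ
    have hu : s τ ∈ J := hrange τ hτ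
    have hPu : 0 < P (s τ) := hPpos _ hu
    have hq : 0 < Real.sqrt (2 * P (s τ)) := Real.sqrt_pos.2 (by positivity)
    have h := ((hw τ hτ).sub ((hs τ hτ).const_mul ν)).add (hsqrt τ hτ)
    refine h.congr_deriv ?_
    simp only [hadef, hLdef]
    field_simp
    ring
  have haC : ∀ τ ∈ I, ContinuousAt a τ := by
    intro τ hτ
    have hPu : 0 < P (s τ) := hPpos _ (hrange τ hτ)
    have hq : 0 < Real.sqrt (2 * P (s τ)) := Real.sqrt_pos.2 (by positivity)
    have hnum : ContinuousAt (fun t => k * (1 - c * s t)) τ := by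
      exact (continuousAt_const.mul (continuousAt_const.sub
        (continuousAt_const.mul (hs τ hτ).continuousAt)))
    have hden : ContinuousAt (fun t => Real.sqrt (2 * P (s t))) τ :=
      (hsqrt τ hτ).continuousAt
    exact hnum.div hden (ne_of_gt hq)
  exact vanish_aux hI hLd haC ht₀ hL0
end

section
/- Let c, ν, k be positive real constants and let (w(t), s(t)) solve w' = k(1 - c s), s' = w - ν s on an interval I. Let N : J → ℝ≥0 solve dN/ds = -ν·√(2N(s)) + k(1 - c s) with N > 0, where the range of s(t) on I is contained in J. Define L(w,s) = w - ν s - √(2N(s)). If L(w(t₀), s(t₀)) = 0 for some t₀ ∈ I, then L(w(t), s(t)) = 0 for all t ∈ I. -/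
theorem stmt1 (c ν k : ℝ) (hc : 0 < c) (hν : 0 < ν) (hk : 0 < k)
    (I J : Set ℝ) (hI : I.OrdConnected)
    (w s N : ℝ → ℝ)
    (hw : ∀ t ∈ I, HasDerivAt w (k * (1 - c * s t)) t)
    (hs : ∀ t ∈ I, HasDerivAt s (w t - ν * s t) t)
    (hN : ∀ x ∈ J, HasDerivAt N (-ν * Real.sqrt (2 * N x) + k * (1 - c * x)) x)
    (hNpos : ∀ x ∈ J, 0 < N x)
    (hrange : ∀ t ∈ I, s t ∈ J)
    (t₀ : ℝ) (ht₀ : t₀ ∈ I)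
    (hL0 : w t₀ - ν * s t₀ - Real.sqrt (2 * N (s t₀)) = 0) :
    ∀ t ∈ I, w t - ν * s t - Real.sqrt (2 * N (s t)) = 0 := by
  set q : ℝ → ℝ := fun t => Real.sqrt (2 * N (s t)) with hq_def
  set L : ℝ → ℝ := fun t => w t - ν * s t - q t with hL_def
  set A : ℝ → ℝ := fun t => -(k * (1 - c * s t)) / q t with hA_def
  have hqpos : ∀ t ∈ I, 0 < q t := fun t ht =>
    Real.sqrt_pos.2 (by have := hNpos _ (hrange t ht); linarith)
  -- derivative of L
  have hL' : ∀ t ∈ I, HasDerivAt L (A t * L t) t := by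
    intro t ht
    have hsJ := hrange t ht
    have hNst := hNpos _ hsJ
    have hq0 : q t ≠ 0 := (hqpos t ht).ne'
    have h1 : HasDerivAt (fun u => N (s u))
        ((-ν * Real.sqrt (2 * N (s t)) + k * (1 - c * s t)) * (w t - ν * s t)) t :=
      (hN _ hsJ).comp t (hs t ht)
    have h2 : HasDerivAt (fun u => 2 * N (s u))
        (2 * ((-ν * Real.sqrt (2 * N (s t)) + k * (1 - c * s t)) * (w t - ν * s t))) t :=
      h1.const_mul 2
    have h3 : HasDerivAt Real.sqrt (1 / (2 * Real.sqrt (2 * N (s t)))) (2 * N (s t)) :=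
      Real.hasDerivAt_sqrt (by positivity)
    have hq' : HasDerivAt q
        (1 / (2 * Real.sqrt (2 * N (s t))) *
          (2 * ((-ν * Real.sqrt (2 * N (s t)) + k * (1 - c * s t)) * (w t - ν * s t)))) t :=
      h3.comp t h2
    have hLd : HasDerivAt L
        (k * (1 - c * s t) - ν * (w t - ν * s t) -
          1 / (2 * Real.sqrt (2 * N (s t))) *
            (2 * ((-ν * Real.sqrt (2 * N (s t)) + k * (1 - c * s t)) * (w t - ν * s t)))) t :=
      ((hw t ht).sub ((hs t ht).const_mul ν)).sub hq'
    convert hLd using 1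
    have hqt : q t = Real.sqrt (2 * N (s t)) := rfl
    rw [hA_def]
    simp only [hL_def]
    rw [hqt] at hq0 ⊢
    field_simp
    ring
  have contA : ContinuousOn A I := by
    have conts : ContinuousOn s I := fun u hu => (hs u hu).continuousAt.continuousWithinAt
    have contN : ContinuousOn N J := fun x hx => (hN x hx).continuousAt.continuousWithinAt
    have contq : ContinuousOn q I := by
      apply Real.continuous_sqrt.comp_continuousOn
      exact continuousOn_const.mul (contN.comp conts hrange)
    exact ((continuousOn_const.mul (continuousOn_const.sub
        (continuousOn_const.mul conts))).neg).div contq (fun u hu => (hqpos u hu).ne')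
  -- main argument via Gronwall
  intro t ht
  have key : L t = 0 := by
    have hL0' : L t₀ = 0 := hL0
    rcases le_total t₀ t with hle | hle
    · have hsub : Set.Icc t₀ t ⊆ I := hI.out ht₀ ht
      obtain ⟨C, hC⟩ := (isCompact_Icc (a := t₀) (b := t)).exists_bound_of_continuousOn
        (contA.mono hsub)
      have hcont : ContinuousOn L (Set.Icc t₀ t) :=
        fun u hu => (hL' u (hsub hu)).continuousAt.continuousWithinAt
      have hderiv : ∀ u ∈ Set.Ico t₀ t, HasDerivWithinAt L (A u * L u) (Set.Ici u) u :=
        fun u hu => (hL' u (hsub (Set.Ico_subset_Icc_self hu))).hasDerivWithinAt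
      have ha : ‖L t₀‖ ≤ 0 := by simp [hL0']
      have hbnd : ∀ u ∈ Set.Ico t₀ t, ‖A u * L u‖ ≤ C * ‖L u‖ + 0 := by
        intro u hu
        rw [norm_mul]
        have := hC u (Set.Ico_subset_Icc_self hu)
        nlinarith [norm_nonneg (L u), norm_nonneg (A u)]
      have hres := norm_le_gronwallBound_of_norm_deriv_right_le hcont hderiv ha hbnd t
        (Set.right_mem_Icc.2 hle)
      have h0 : gronwallBound 0 C 0 (t - t₀) = 0 := by
        rw [gronwallBound_ε0]; ring
      rw [h0] at hres
      exact norm_le_zero_iff.1 hres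
    · -- reflect time
      have hsub : Set.Icc t t₀ ⊆ I := hI.out ht ht₀
      obtain ⟨C, hC⟩ := (isCompact_Icc (a := t) (b := t₀)).exists_bound_of_continuousOn
        (contA.mono hsub)
      set g : ℝ → ℝ := fun u => L (t + t₀ - u) with hg_def
      have hmem : ∀ u ∈ Set.Icc t t₀, t + t₀ - u ∈ Set.Icc t t₀ := by
        intro u hu
        constructor <;> [linarith [hu.2]; linarith [hu.1]]
      have hg' : ∀ u ∈ Set.Icc t t₀,
          HasDerivAt g (-(A (t + t₀ - u) * L (t + t₀ - u))) u := by
        intro u hu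
        have haff : HasDerivAt (fun u : ℝ => t + t₀ - u) (-1) u := by
          simpa using (hasDerivAt_id u).const_sub (t + t₀)
        have := (hL' _ (hsub (hmem u hu))).comp u haff
        exact this.congr_deriv (by beta_reduce; ring)
      have hcont : ContinuousOn g (Set.Icc t t₀) :=
        fun u hu => (hg' u hu).continuousAt.continuousWithinAt
      have hderiv : ∀ u ∈ Set.Ico t t₀,
          HasDerivWithinAt g (-(A (t + t₀ - u) * L (t + t₀ - u))) (Set.Ici u) u :=
        fun u hu => (hg' u (Set.Ico_subset_Icc_self hu)).hasDerivWithinAt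
      have ha : ‖g t‖ ≤ 0 := by
        have hgt : g t = L t₀ := by simp [hg_def]
        simp [hgt, hL0']
      have hbnd : ∀ u ∈ Set.Ico t t₀,
          ‖-(A (t + t₀ - u) * L (t + t₀ - u))‖ ≤ C * ‖g u‖ + 0 := by
        intro u hu
        have hu' := hmem u (Set.Ico_subset_Icc_self hu)
        rw [norm_neg, norm_mul]
        have := hC _ hu'
        have hgu : g u = L (t + t₀ - u) := rfl
        rw [hgu]
        nlinarith [norm_nonneg (L (t + t₀ - u)), norm_nonneg (A (t + t₀ - u))]
      have hres := norm_le_gronwallBound_of_norm_deriv_right_le hcont hderiv ha hbnd t₀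
        (Set.right_mem_Icc.2 hle)
      have h0 : gronwallBound 0 C 0 (t₀ - t) = 0 := by
        rw [gronwallBound_ε0]; ring
      rw [h0] at hres
      have hgt0 : g t₀ = L t := by simp [hg_def]
      rw [hgt0] at hres
      exact norm_le_zero_iff.1 hres
  simpa [hL_def, hq_def] using key
end

section
/- Along the flow (w,s)' = (k(1 - c(t)s), w - ν(t)s) with time-dependent coefficients satisfying c(t) ≥ c₋ and ν(t) ≥ ν₋, and for a function P₁ > 0 solving dP₁/ds = ν₋√(2P₁) + k(1 - c₋ s), the Lyapunov quantity L(t) := w(t) - ν₋ s(t) + √(2P₁(s(t))) satisfies the differential inequality dL/dt ≤ (k(1 - c₋ s(t))/√(2P₁(s(t)))) · L(t), provided 0 < s(t) ≤ 1/c₋ for all t in the interval. -/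
theorem stmt2 (k cm νm : ℝ) (hk : 0 < k) (hc : 0 < cm) (hν : 0 < νm)
    (I J : Set ℝ) (c ν : ℝ → ℝ)
    (hcb : ∀ t ∈ I, cm ≤ c t) (hνb : ∀ t ∈ I, νm ≤ ν t)
    (w s P₁ : ℝ → ℝ)
    (hw : ∀ t ∈ I, HasDerivAt w (k * (1 - c t * s t)) t)
    (hs : ∀ t ∈ I, HasDerivAt s (w t - ν t * s t) t)
    (hP : ∀ x ∈ J, HasDerivAt P₁ (νm * Real.sqrt (2 * P₁ x) + k * (1 - cm * x)) x)
    (hPpos : ∀ x ∈ J, 0 < P₁ x)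
    (hrange : ∀ t ∈ I, s t ∈ J)
    (hsbound : ∀ t ∈ I, 0 < s t ∧ s t ≤ 1 / cm) :
    ∀ t ∈ I, ∃ d : ℝ,
      HasDerivAt (fun τ => w τ - νm * s τ + Real.sqrt (2 * P₁ (s τ))) d t ∧
      d ≤ k * (1 - cm * s t) / Real.sqrt (2 * P₁ (s t)) *
        (w t - νm * s t + Real.sqrt (2 * P₁ (s t))) := by
  intro t ht
  have hsJ := hrange t ht
  have hPpos' := hPpos (s t) hsJ
  have h2P : (0:ℝ) < 2 * P₁ (s t) := by linarith
  set S := Real.sqrt (2 * P₁ (s t)) with hSdef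
  have hSpos : 0 < S := Real.sqrt_pos.mpr h2P
  have hinner : HasDerivAt (fun τ => 2 * P₁ (s τ))
      (2 * ((νm * S + k * (1 - cm * s t)) * (w t - ν t * s t))) t := by
    have := ((hP (s t) hsJ).comp t (hs t ht)).const_mul 2
    simp only [Function.comp] at this
    exact this
  have hsqrt : HasDerivAt (fun τ => Real.sqrt (2 * P₁ (s τ)))
      (2 * ((νm * S + k * (1 - cm * s t)) * (w t - ν t * s t)) / (2 * S)) t := by
    exact hinner.sqrt (ne_of_gt h2P)
  have hL : HasDerivAt (fun τ => w τ - νm * s τ + Real.sqrt (2 * P₁ (s τ)))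
      (k * (1 - c t * s t) - νm * (w t - ν t * s t)
        + 2 * ((νm * S + k * (1 - cm * s t)) * (w t - ν t * s t)) / (2 * S)) t :=
    ((hw t ht).sub ((hs t ht).const_mul νm)).add hsqrt
  refine ⟨_, hL, ?_⟩
  have hcb' := hcb t ht
  have hνb' := hνb t ht
  obtain ⟨hs0, hs1⟩ := hsbound t ht
  have hcm : 1 - cm * s t ≥ 0 := by
    have : cm * s t ≤ 1 := by
      rw [le_div_iff₀ hc] at hs1; linarith [hs1]
    linarith
  have hd : k * (1 - c t * s t) - νm * (w t - ν t * s t)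
      + 2 * ((νm * S + k * (1 - cm * s t)) * (w t - ν t * s t)) / (2 * S)
      = k * (1 - c t * s t) + k * (1 - cm * s t) * (w t - ν t * s t) / S := by
    field_simp
    ring
  rw [hd, div_mul_eq_mul_div, le_div_iff₀ hSpos, add_mul,
    div_mul_cancel₀ _ hSpos.ne']
  nlinarith [mul_nonneg (mul_nonneg (mul_nonneg hk.le hcm) hs0.le) (sub_nonneg.mpr hνb'),
    mul_nonneg (mul_nonneg (mul_nonneg hk.le (sub_nonneg.mpr hcb')) hs0.le) hSpos.le]
end

section
/- Let 0 < ν < 2√(kc), θ = √(4kc-ν²)/2, and B > 0. Define f(t) = B·e^{-ν(t-t₁)/2}·(cos(θ(t-t₁)) - (ν/(2θ))·sin(θ(t-t₁))) for t ≤ t₁. Then f(t) ≥ 0 for all t ∈ [t₂, t₁], with strict inequality for t ∈ (t₂, t₁], where t₂ = t₁ - (1/θ)(π - arctan(2θ/ν)), and f(t₂) = 0. -/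
theorem stmt8 (k c ν : ℝ) (hk : 0 < k) (hc : 0 < c) (hν : 0 < ν)
    (hweak : ν < 2 * Real.sqrt (k * c))
    (θ : ℝ) (hθ : θ = Real.sqrt (4 * k * c - ν ^ 2) / 2)
    (B t₁ : ℝ) (hB : 0 < B)
    (f : ℝ → ℝ)
    (hf : f = fun t => B * Real.exp (-ν * (t - t₁) / 2) *
      (Real.cos (θ * (t - t₁)) - ν / (2 * θ) * Real.sin (θ * (t - t₁))))
    (t₂ : ℝ) (ht₂ : t₂ = t₁ - (1 / θ) * (Real.pi - Real.arctan (2 * θ / ν))) :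
    (∀ t ∈ Set.Icc t₂ t₁, 0 ≤ f t) ∧
    (∀ t ∈ Set.Ioc t₂ t₁, 0 < f t) ∧ f t₂ = 0 := by
  have hkc : 0 < 4 * k * c - ν ^ 2 := by
    have h1 : ν ^ 2 < (2 * Real.sqrt (k * c)) ^ 2 := by
      apply pow_lt_pow_left₀ hweak hν.le
      · norm_num
    have h2 : (2 * Real.sqrt (k * c)) ^ 2 = 4 * (k * c) := by
      rw [mul_pow, Real.sq_sqrt (by positivity)]
      norm_num
    nlinarith
  have hθpos : 0 < θ := by rw [hθ]; positivity
  set a : ℝ := ν / (2 * θ) with ha_def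
  have ha : 0 < a := by positivity
  set φ : ℝ := Real.arctan a with hφ_def
  have hφpos : 0 < φ := by rw [hφ_def, ← Real.arctan_zero]; exact Real.arctan_strictMono ha
  have hφlt : φ < Real.pi / 2 := Real.arctan_lt_pi_div_two a
  have hainv : a⁻¹ = 2 * θ / ν := by
    rw [ha_def, inv_div]
  have harct : Real.arctan (2 * θ / ν) = Real.pi / 2 - φ := by
    rw [← hainv, Real.arctan_inv_of_pos ha]
  -- key trig identity
  have hsq : (0:ℝ) < Real.sqrt (1 + a ^ 2) := by positivity
  have key : ∀ s : ℝ, Real.cos s - a * Real.sin s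
      = Real.sqrt (1 + a ^ 2) * Real.cos (s + φ) := by
    intro s
    rw [Real.cos_add, Real.cos_arctan, Real.sin_arctan]
    field_simp
  have hs₂ : θ * (t₂ - t₁) = -(Real.pi / 2 + φ) := by
    rw [ht₂, harct]
    field_simp
    ring
  -- f t rewritten
  have hfval : ∀ t : ℝ, f t = B * Real.exp (-ν * (t - t₁) / 2) *
      (Real.sqrt (1 + a ^ 2) * Real.cos (θ * (t - t₁) + φ)) := by
    intro t
    rw [hf]
    simp only []
    rw [key (θ * (t - t₁))]
  have hmono : ∀ t, t₂ ≤ t → t ≤ t₁ → -(Real.pi/2) ≤ θ * (t - t₁) + φ ∧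
      θ * (t - t₁) + φ ≤ φ := by
    intro t h1 h2
    constructor
    · have : θ * (t₂ - t₁) ≤ θ * (t - t₁) := by
        apply mul_le_mul_of_nonneg_left (by linarith) hθpos.le
      rw [hs₂] at this
      linarith
    · nlinarith
  refine ⟨?_, ?_, ?_⟩
  · intro t ht
    obtain ⟨h1, h2⟩ := ht
    obtain ⟨hl, hr⟩ := hmono t h1 h2
    rw [hfval]
    have : 0 ≤ Real.cos (θ * (t - t₁) + φ) := by
      apply Real.cos_nonneg_of_mem_Icc
      exact Set.mem_Icc.mpr ⟨by linarith, by linarith⟩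
    positivity
  · intro t ht
    obtain ⟨h1, h2⟩ := ht
    obtain ⟨hl, hr⟩ := hmono t h1.le h2
    have hl' : -(Real.pi/2) < θ * (t - t₁) + φ := by
      have : θ * (t₂ - t₁) < θ * (t - t₁) := by
        apply mul_lt_mul_of_pos_left (by linarith) hθpos
      rw [hs₂] at this
      linarith
    rw [hfval]
    have : 0 < Real.cos (θ * (t - t₁) + φ) := by
      apply Real.cos_pos_of_mem_Ioo
      exact Set.mem_Ioo.mpr ⟨by linarith, by linarith⟩
    positivity
  · rw [hfval, hs₂]
    have : -(Real.pi / 2 + φ) + φ = -(Real.pi/2) := by ring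
    rw [this, Real.cos_neg, Real.cos_pi_div_two]
    ring
end

section
/- Consider G' = -G² + ν(t)G - k c(t) with ν(t) ≤ ν₊, c(t) ≥ c₋, k > 0, and ν₊ ≥ 2√(k c₋) (median or strong alignment). If G(0) < G♯ := (ν₊ - √(ν₊² - 4kc₋))/2, then G(t) → -∞ in finite time. -/
theorem stmt11 (k cm νp : ℝ) (hk : 0 < k) (hc : 0 < cm) (hν : 0 < νp)
    (hmed : 2 * Real.sqrt (k * cm) ≤ νp)
    (ν c : ℝ → ℝ) (hνb : ∀ t, 0 < ν t ∧ ν t ≤ νp) (hcb : ∀ t, cm ≤ c t)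
    (G₀ : ℝ) (hG₀ : G₀ < (νp - Real.sqrt (νp ^ 2 - 4 * k * cm)) / 2) :
    ¬ ∃ G : ℝ → ℝ, G 0 = G₀ ∧
      ∀ t, 0 ≤ t → HasDerivAt G (-(G t) ^ 2 + ν t * G t - k * c t) t := by
  rintro ⟨G, hG0, hG⟩
  have hkcm : 0 < k * cm := mul_pos hk hc
  have hsqkc : Real.sqrt (k * cm) ^ 2 = k * cm := Real.sq_sqrt hkcm.le
  have hdisc : 0 ≤ νp ^ 2 - 4 * k * cm := by nlinarith [Real.sqrt_nonneg (k * cm)]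
  set s : ℝ := Real.sqrt (νp ^ 2 - 4 * k * cm) with hsdef
  have hsq : s ^ 2 = νp ^ 2 - 4 * k * cm := Real.sq_sqrt hdisc
  have hs0 : 0 ≤ s := Real.sqrt_nonneg _
  set a : ℝ := (νp - s) / 2 with hadef
  set b : ℝ := (νp + s) / 2 with hbdef
  have hslt : s < νp := by nlinarith
  have ha : 0 < a := by rw [hadef]; linarith
  have hab : a ≤ b := by rw [hadef, hbdef]; linarith
  have hsum : a + b = νp := by rw [hadef, hbdef]; ring
  have hprod : a * b = k * cm := by
    rw [hadef, hbdef]; linear_combination (-1/4 : ℝ) * hsq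
  have hG₀a : G₀ < a := hG₀
  set ε : ℝ := min (k * cm) ((a - G₀) * (b - G₀)) with hεdef
  have hε : 0 < ε := lt_min hkcm (mul_pos (by linarith) (by linarith))
  have hε1 : ε ≤ k * cm := min_le_left _ _
  have hε2 : ε ≤ (a - G₀) * (b - G₀) := min_le_right _ _
  -- pointwise derivative bounds
  have key1 : ∀ t : ℝ, G t < a → -(G t) ^ 2 + ν t * G t - k * c t < 0 := by
    intro t hlt
    have hν' := hνb t
    have hc' := hcb t
    have h4 : k * cm ≤ k * c t := mul_le_mul_of_nonneg_left hc' hk.le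
    rcases le_or_gt (G t) 0 with hx | hx
    · have := mul_nonpos_of_nonneg_of_nonpos hν'.1.le hx
      have := sq_nonneg (G t)
      linarith
    · have h1 : ν t * G t ≤ νp * G t := mul_le_mul_of_nonneg_right hν'.2 hx.le
      have h5 : (a - G t) * (b - G t) = (G t) ^ 2 - νp * G t + k * cm := by
        linear_combination hprod - G t * hsum
      have h6 : 0 < (a - G t) * (b - G t) :=
        mul_pos (by linarith) (by linarith)
      linarith
  have key2 : ∀ t : ℝ, G t ≤ G₀ → -(G t) ^ 2 + ν t * G t - k * c t ≤ -ε := by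
    intro t hle
    have hν' := hνb t
    have hc' := hcb t
    have h4 : k * cm ≤ k * c t := mul_le_mul_of_nonneg_left hc' hk.le
    rcases le_or_gt (G t) 0 with hx | hx
    · have := mul_nonpos_of_nonneg_of_nonpos hν'.1.le hx
      have := sq_nonneg (G t)
      linarith
    · have h1 : ν t * G t ≤ νp * G t := mul_le_mul_of_nonneg_right hν'.2 hx.le
      have h2 : (a - G t) * (b - G t) - (a - G₀) * (b - G₀) =
          (G₀ - G t) * (a + b - G₀ - G t) := by ring
      have h3 : (0:ℝ) ≤ (G₀ - G t) * (a + b - G₀ - G t) :=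
        mul_nonneg (by linarith) (by linarith)
      have h5 : (a - G t) * (b - G t) = (G t) ^ 2 - νp * G t + k * cm := by
        linear_combination hprod - G t * hsum
      linarith
  have hcontOn : ContinuousOn G (Set.Ici 0) := fun u hu =>
    ((hG u hu).continuousAt).continuousWithinAt
  -- Claim 1 : G stays below a
  have claim1 : ∀ t : ℝ, 0 ≤ t → G t < a := by
    intro t ht
    by_contra hcon
    push_neg at hcon
    set S : Set ℝ := Set.Ici 0 ∩ G ⁻¹' Set.Ici a with hSdef
    have hSne : S.Nonempty := ⟨t, ht, hcon⟩
    have hbdd : BddBelow S := ⟨0, fun u hu => hu.1⟩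
    have hSclosed : IsClosed S :=
      hcontOn.preimage_isClosed_of_isClosed isClosed_Ici isClosed_Ici
    have ht₁S : sInf S ∈ S := hSclosed.csInf_mem hSne hbdd
    set t₁ : ℝ := sInf S with ht₁def
    have ht₁pos : 0 < t₁ := by
      rcases lt_or_eq_of_le (Set.mem_Ici.1 ht₁S.1) with h | h
      · exact h
      · exfalso
        have : a ≤ G t₁ := ht₁S.2
        rw [← h, hG0] at this
        linarith
    have hlt : ∀ u : ℝ, 0 ≤ u → u < t₁ → G u < a := by
      intro u hu hut
      by_contra h
      push_neg at h
      exact absurd (csInf_le hbdd ⟨hu, h⟩) (not_le.2 hut)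
    have hanti : StrictAntiOn G (Set.Icc 0 t₁) := by
      apply strictAntiOn_of_deriv_neg (convex_Icc 0 t₁)
        (hcontOn.mono (Set.Icc_subset_Ici_self))
      intro x hx
      rw [interior_Icc] at hx
      rw [(hG x hx.1.le).deriv]
      exact key1 x (hlt x hx.1.le hx.2)
    have : G t₁ < G 0 :=
      hanti (Set.left_mem_Icc.2 ht₁pos.le) ⟨ht₁pos.le, le_refl _⟩ ht₁pos
    rw [hG0] at this
    have h9 : a ≤ G t₁ := ht₁S.2
    linarith
  -- Claim 2 : G t ≤ G₀ for t ≥ 0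
  have claim2 : ∀ t : ℝ, 0 ≤ t → G t ≤ G₀ := by
    have hanti : StrictAntiOn G (Set.Ici 0) := by
      apply strictAntiOn_of_deriv_neg (convex_Ici 0) hcontOn
      intro x hx
      rw [interior_Ici] at hx
      rw [(hG x hx.le).deriv]
      exact key1 x (claim1 x hx.le)
    intro t ht
    rcases eq_or_lt_of_le ht with h | h
    · rw [← h, hG0]
    · have := hanti (Set.mem_Ici.2 (le_refl 0)) (Set.mem_Ici.2 ht) h
      rw [hG0] at this
      linarith
  -- Claim 3 : linear decay
  have claim3 : ∀ t : ℝ, 0 ≤ t → G t ≤ G₀ - ε * t := by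
    have hH : ∀ u : ℝ, 0 ≤ u →
        HasDerivAt (fun x => G x + ε * x) (-(G u) ^ 2 + ν u * G u - k * c u + ε) u := by
      intro u hu
      have h := (hG u hu).add ((hasDerivAt_id u).const_mul ε)
      rw [mul_one] at h
      exact h
    have hanti : AntitoneOn (fun x => G x + ε * x) (Set.Ici 0) := by
      apply antitoneOn_of_deriv_nonpos (convex_Ici 0)
      · exact fun u hu => ((hH u hu).continuousAt).continuousWithinAt
      · intro x hx
        rw [interior_Ici] at hx
        exact ((hH x (le_of_lt hx)).differentiableAt).differentiableWithinAt
      · intro x hx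
        rw [interior_Ici] at hx
        rw [(hH x (le_of_lt hx)).deriv]
        linarith [key2 x (claim2 x hx.le)]
    intro t ht
    have := hanti (Set.mem_Ici.2 (le_refl 0)) (Set.mem_Ici.2 ht) ht
    simp only [mul_zero, add_zero, hG0] at this
    linarith
  -- Claim 4 : G eventually ≤ -1
  set T₀ : ℝ := max 0 ((G₀ + 1) / ε) with hT₀def
  have hT₀0 : 0 ≤ T₀ := le_max_left _ _
  have claim4 : ∀ t : ℝ, T₀ ≤ t → G t ≤ -1 := by
    intro t ht
    have h0t : 0 ≤ t := le_trans hT₀0 ht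
    have h1 : (G₀ + 1) / ε ≤ t := le_trans (le_max_right _ _) ht
    have h2 : G₀ + 1 ≤ ε * t := by
      rw [div_le_iff₀ hε] at h1
      linarith
    linarith [claim3 t h0t]
  -- Blow-up via u = -1/G
  have hu : ∀ u : ℝ, T₀ ≤ u →
      HasDerivAt (fun x => -(G x)⁻¹ + x)
        ((-(G u) ^ 2 + ν u * G u - k * c u) / (G u) ^ 2 + 1) u := by
    intro u hTu
    have hne : G u ≠ 0 := by
      have := claim4 u hTu
      intro h; rw [h] at this; linarith
    have h1 := (((hG u (le_trans hT₀0 hTu)).inv hne).neg).add (hasDerivAt_id u)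
    have h2 : -(-(-(G u) ^ 2 + ν u * G u - k * c u) / G u ^ 2) + 1 =
        (-(G u) ^ 2 + ν u * G u - k * c u) / (G u) ^ 2 + 1 := by
      field_simp
    rw [h2] at h1
    exact h1
  have hanti : AntitoneOn (fun x => -(G x)⁻¹ + x) (Set.Ici T₀) := by
    apply antitoneOn_of_deriv_nonpos (convex_Ici T₀)
    · exact fun u hTu => ((hu u hTu).continuousAt).continuousWithinAt
    · intro x hx
      rw [interior_Ici] at hx
      exact ((hu x hx.le).differentiableAt).differentiableWithinAt
    · intro x hx
      rw [interior_Ici] at hx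
      rw [(hu x hx.le).deriv]
      have hG1 : G x ≤ -1 := claim4 x hx.le
      have hν' := hνb x
      have hc' := hcb x
      have h4 : k * cm ≤ k * c x := mul_le_mul_of_nonneg_left hc' hk.le
      have hnum : -(G x) ^ 2 + ν x * G x - k * c x + (G x) ^ 2 ≤ 0 := by
        have := mul_nonpos_of_nonneg_of_nonpos hν'.1.le (by linarith : G x ≤ 0)
        linarith
      have hden : (0:ℝ) < (G x) ^ 2 := by nlinarith
      have : (-(G x) ^ 2 + ν x * G x - k * c x) / (G x) ^ 2 + 1 =
          (-(G x) ^ 2 + ν x * G x - k * c x + (G x) ^ 2) / (G x) ^ 2 := by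
        rw [div_add_one hden.ne']
      rw [this]
      exact div_nonpos_of_nonpos_of_nonneg hnum hden.le
  set T : ℝ := T₀ + (-(G T₀)⁻¹) + 1 with hTdef
  have huT₀pos : 0 < -(G T₀)⁻¹ := by
    have h1 : G T₀ ≤ -1 := claim4 T₀ (le_refl _)
    have : (G T₀)⁻¹ < 0 := inv_lt_zero.2 (by linarith)
    linarith
  have hTT₀ : T₀ ≤ T := by rw [hTdef]; linarith
  have hTle : G T ≤ -1 := claim4 T hTT₀
  have huTpos : 0 < -(G T)⁻¹ := by
    have : (G T)⁻¹ < 0 := inv_lt_zero.2 (by linarith)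
    linarith
  have := hanti (Set.mem_Ici.2 (le_refl T₀)) (Set.mem_Ici.2 hTT₀) hTT₀
  rw [hTdef] at this
  simp only at this
  linarith
end

section
/- Let k, c₊ > 0 and 0 < ν₋ < 2√(kc₊), θ = √(4kc₊ - ν₋²)/2. Let N : ℝ≥0 → ℝ solve dN/ds = -ν₋√(2N) + k(1 - c₊ s) on an interval where N > 0, and set 𝗐(s) = ν₋ s + √(2N(s)). Then 𝗐 is concave on any interval where N > 0, i.e. 𝗐''(s) ≤ 0. -/
theorem stmt12 (k cp νm : ℝ) (hk : 0 < k) (hc : 0 < cp) (hν : 0 < νm)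
    (hweak : νm < 2 * Real.sqrt (k * cp))
    (J : Set ℝ) (hJ : J.OrdConnected)
    (N : ℝ → ℝ)
    (hN : ∀ x ∈ J, HasDerivAt N (-νm * Real.sqrt (2 * N x) + k * (1 - cp * x)) x)
    (hNpos : ∀ x ∈ J, 0 < N x) :
    ConcaveOn ℝ J (fun x => νm * x + Real.sqrt (2 * N x)) := by
  have hconv : Convex ℝ J := convex_iff_ordConnected.mpr hJ
  set S : ℝ → ℝ := fun x => Real.sqrt (2 * N x) with hSdef
  have hSpos : ∀ x ∈ J, 0 < S x := fun x hx =>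
    Real.sqrt_pos.mpr (by linarith [hNpos x hx])
  have hSsq : ∀ x ∈ J, S x ^ 2 = 2 * N x := fun x hx =>
    Real.sq_sqrt (by linarith [hNpos x hx])
  -- derivative of S
  have hS' : ∀ x ∈ J, HasDerivAt S
      ((2 * (-νm * S x + k * (1 - cp * x))) / (2 * S x)) x := by
    intro x hx
    exact ((hN x hx).const_mul 2).sqrt (ne_of_gt (by linarith [hNpos x hx]))
  -- first derivative of w
  have hw' : ∀ x ∈ J, HasDerivAt (fun x => νm * x + S x)
      (k * (1 - cp * x) / S x) x := by
    intro x hx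
    have h1 : HasDerivAt (fun x : ℝ => νm * x) νm x := by
      simpa using (hasDerivAt_id x).const_mul νm
    have := h1.add (hS' x hx)
    convert this using 1
    have hS0 := (hSpos x hx).ne'
    · rfl
    · rfl
    · rfl
    rw [mul_div_mul_left _ _ (two_ne_zero' ℝ), add_div' _ _ _ (hSpos x hx).ne']
    ring
  -- second derivative
  have hg' : ∀ x ∈ J, HasDerivAt (fun x => k * (1 - cp * x) / S x)
      (((k * -cp) * S x - k * (1 - cp * x) *
        ((2 * (-νm * S x + k * (1 - cp * x))) / (2 * S x))) / (S x) ^ 2) x := by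
    intro x hx
    have hnum : HasDerivAt (fun x : ℝ => k * (1 - cp * x)) (k * -cp) x := by
      simpa using (((hasDerivAt_id x).const_mul cp).const_sub 1).const_mul k
    exact hnum.div (hS' x hx) (hSpos x hx).ne'
  have hg'nonpos : ∀ x ∈ J,
      ((k * -cp) * S x - k * (1 - cp * x) *
        ((2 * (-νm * S x + k * (1 - cp * x))) / (2 * S x))) / (S x) ^ 2 ≤ 0 := by
    intro x hx
    have hS0 := hSpos x hx
    rw [div_nonpos_iff]
    right
    constructor
    · have key : νm * (1 - cp * x) * S x ≤ cp * (S x) ^ 2 + k * (1 - cp * x) ^ 2 := by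
        set a := 1 - cp * x
        have hq : (2 * Real.sqrt (k * cp)) * (|a| * S x) ≥ νm * (|a| * S x) := by
          apply mul_le_mul_of_nonneg_right hweak.le
          positivity
        have hsq : Real.sqrt k * Real.sqrt cp = Real.sqrt (k * cp) :=
          (Real.sqrt_mul hk.le cp).symm
        rw [← hsq] at hq
        nlinarith [sq_nonneg (Real.sqrt cp * S x - Real.sqrt k * |a|),
          Real.sq_sqrt hk.le, Real.sq_sqrt hc.le, sq_abs a,
          mul_le_mul_of_nonneg_left
            (mul_le_mul_of_nonneg_right (le_abs_self a) hS0.le) hν.le,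
          Real.sqrt_nonneg k, Real.sqrt_nonneg cp]
      have hdiv : k * (1 - cp * x) *
          ((2 * (-νm * S x + k * (1 - cp * x))) / (2 * S x))
          = (k * (1 - cp * x) * (-νm * S x + k * (1 - cp * x))) / S x := by
        field_simp
      rw [hdiv, sub_nonpos, le_div_iff₀ hS0]
      nlinarith [hk.le]
    · positivity
  apply concaveOn_of_hasDerivWithinAt2_nonpos hconv
    (f' := fun x => k * (1 - cp * x) / S x)
    (f'' := fun x => ((k * -cp) * S x - k * (1 - cp * x) *
        ((2 * (-νm * S x + k * (1 - cp * x))) / (2 * S x))) / (S x) ^ 2)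
  · intro x hx
    exact (hw' x hx).continuousAt.continuousWithinAt
  · intro x hx
    exact (hw' x (interior_subset hx)).hasDerivWithinAt
  · intro x hx
    exact (hg' x (interior_subset hx)).hasDerivWithinAt
  · intro x hx
    exact hg'nonpos x (interior_subset hx)
end
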